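/- Let μ be a finite measure on ℝⁿ with no atoms. Then sup_{x ∈ ℝⁿ} μ({y : ‖x − y‖ < δ}) → 0 as δ → 0. -/

import Mathlib

open MeasureTheory Set Filter
open scoped ENNReal

/-- For a finite Borel measure `μ` on `ℝⁿ` with no atoms,
`sup_x μ({y : ‖x − y‖ < δ}) → 0` as `δ → 0⁺`. -/
theorem stmt14 {n : ℕ} (μ : Measure (EuclideanSpace ℝ (Fin n)))
    [IsFiniteMeasure μ] [NullSingletonClass μ] :
    Tendsto (fun δ : ℝ => ⨆ x : EuclideanSpace ℝ (Fin n),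
        μ {y : EuclideanSpace ℝ (Fin n) | ‖x - y‖ < δ})
      (nhdsWithin 0 (Ioi 0)) (nhds 0) := by
  set E := EuclideanSpace ℝ (Fin n)
  have hball : ∀ (x : E) (δ : ℝ), {y : E | ‖x - y‖ < δ} = Metric.ball x δ := by
    intro x δ
    ext y
    simp [Metric.mem_ball, dist_eq_norm, norm_sub_rev]
    rw [dist_comm]
    exact iff_of_eq (congrArg (· < δ) (dist_eq_norm x y).symm)
  -- key claim: for every ε > 0 there is δ > 0 with ∀ x, μ (ball x δ) ≤ ε
  have key : ∀ ε : ℝ≥0∞, 0 < ε → ∃ δ : ℝ, 0 < δ ∧ ∀ x : E, μ (Metric.ball x δ) ≤ ε := by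
    intro ε hε
    by_contra hcon
    push_neg at hcon
    have hpos : ∀ k : ℕ, (0:ℝ) < 1 / (k + 1) := by
      intro k; positivity
    choose x hx using fun k : ℕ => hcon (1 / (k + 1)) (hpos k)
    -- tightness: find R with μ (closedBall 0 R)ᶜ < ε
    have htight : ∃ R : ℕ, μ (Metric.closedBall (0:E) R)ᶜ < ε := by
      have hanti : Antitone fun k : ℕ => (Metric.closedBall (0:E) k)ᶜ := by
        intro a b hab
        exact compl_subset_compl.2 (Metric.closedBall_subset_closedBall (by exact_mod_cast hab))
      have hint : ⋂ k : ℕ, (Metric.closedBall (0:E) k)ᶜ = ∅ := by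
        ext y
        simp only [mem_iInter, mem_compl_iff, Metric.mem_closedBall, mem_empty_iff_false,
          iff_false, not_forall, not_not]
        obtain ⟨k, hk⟩ := exists_nat_ge (dist y (0:E))
        exact ⟨k, hk⟩
      have := tendsto_measure_iInter_atTop
        (μ := μ) (s := fun k : ℕ => (Metric.closedBall (0:E) k)ᶜ)
        (fun k => (measurableSet_closedBall.compl).nullMeasurableSet) hanti
        ⟨0, measure_ne_top μ _⟩
      rw [hint] at this
      simp only [measure_empty] at this
      have := this.eventually_lt_const hε
      exact this.exists
    obtain ⟨R, hR⟩ := htight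
    -- each x k lies in closedBall 0 (R + 1)
    have hxball : ∀ k : ℕ, x k ∈ Metric.closedBall (0:E) (R + 1) := by
      intro k
      have hne : (Metric.ball (x k) (1 / (k + 1)) ∩ Metric.closedBall (0:E) R).Nonempty := by
        by_contra hem
        rw [not_nonempty_iff_eq_empty] at hem
        have hsub : Metric.ball (x k) (1 / (k + 1)) ⊆ (Metric.closedBall (0:E) R)ᶜ := by
          intro y hy
          intro hy'
          have hmem := mem_inter hy hy'
          rw [hem] at hmem
          exact hmem
        exact absurd ((measure_mono hsub).trans hR.le) (not_le.2 (hx k))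
      obtain ⟨y, hy1, hy2⟩ := hne
      have h1 : dist (x k) y < 1 := by
        have := Metric.mem_ball'.1 hy1
        calc dist (x k) y < 1 / (k + 1) := this
        _ ≤ 1 := by
          rw [div_le_one (by positivity)]
          linarith [Nat.cast_nonneg (α := ℝ) k]
      have h2 : dist y (0:E) ≤ R := Metric.mem_closedBall.1 hy2
      have : dist (x k) (0:E) ≤ dist (x k) y + dist y (0:E) := dist_triangle _ _ _
      exact Metric.mem_closedBall.2 (by linarith)
    -- extract a convergent subsequence
    obtain ⟨z, _, φ, hφ, hconv⟩ :=
      (isCompact_closedBall (0:E) (R + 1)).tendsto_subseq hxball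
    -- ε ≤ μ (ball z r) for every r > 0
    have hzr : ∀ r : ℝ, 0 < r → ε ≤ μ (Metric.ball z r) := by
      intro r hr
      have h1 : ∀ᶠ k in atTop, dist (x (φ k)) z < r / 2 := by
        have := hconv (Metric.ball_mem_nhds z (by linarith : (0:ℝ) < r / 2))
        filter_upwards [this] with k hk
        simpa [Metric.mem_ball] using hk
      have h2 : ∀ᶠ k in atTop, (1 : ℝ) / (φ k + 1) ≤ r / 2 := by
        have := tendsto_one_div_atTop_nhds_zero_nat (𝕜 := ℝ)
        have h3 : Tendsto (fun k : ℕ => (1:ℝ) / (φ k + 1)) atTop (nhds 0) := by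
          apply tendsto_one_div_add_atTop_nhds_zero_nat.comp
          exact (hφ.tendsto_atTop)
        exact h3.eventually_le_const (by linarith : (0:ℝ) < r/2)
      obtain ⟨k, hk1, hk2⟩ := (h1.and h2).exists
      have hsub : Metric.ball (x (φ k)) (1 / (φ k + 1)) ⊆ Metric.ball z r := by
        intro y hy
        have := Metric.mem_ball.1 hy
        have htri : dist y z ≤ dist y (x (φ k)) + dist (x (φ k)) z := dist_triangle _ _ _
        have : dist y z < r / 2 + r / 2 := by
          calc dist y z ≤ dist y (x (φ k)) + dist (x (φ k)) z := htri
          _ < r / 2 + r / 2 := by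
            apply add_lt_add_of_le_of_lt
            · exact le_trans (Metric.mem_ball.1 hy).le hk2
            · exact hk1
        exact Metric.mem_ball.2 (by linarith)
      exact le_trans (hx (φ k)).le (measure_mono hsub)
    -- continuity from above at {z} gives contradiction
    have hanti : Antitone fun k : ℕ => Metric.ball z (1 / (k + 1)) := by
      intro a b hab
      apply Metric.ball_subset_ball
      apply div_le_div_of_nonneg_left one_pos.le (by positivity)
      exact_mod_cast Nat.succ_le_succ hab
    have hint : ⋂ k : ℕ, Metric.ball z (1 / (k + 1)) = {z} := by
      ext y
      simp only [mem_iInter, Metric.mem_ball, mem_singleton_iff]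
      constructor
      · intro h
        have : dist y z ≤ 0 := by
          by_contra hpos'
          push_neg at hpos'
          obtain ⟨k, hk⟩ := exists_nat_gt (1 / dist y z)
          have hk0 : (0:ℝ) < 1 / dist y z := by positivity
          have : 1 / ((k:ℝ) + 1) < dist y z := by
            rw [div_lt_iff₀ (by positivity)]
            rw [div_lt_iff₀ hpos'] at hk
            nlinarith
          exact absurd (h k) (not_lt.2 this.le)
        exact dist_le_zero.1 this
      · intro h
        subst h
        intro k
        simpa using hpos k
    have htends := tendsto_measure_iInter_atTop
      (μ := μ) (s := fun k : ℕ => Metric.ball z (1 / (k + 1)))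
      (fun k => measurableSet_ball.nullMeasurableSet) hanti ⟨0, measure_ne_top μ _⟩
    rw [hint] at htends
    have hz0 : μ {z} = 0 := measure_singleton z
    rw [hz0] at htends
    have : ε ≤ 0 := ge_of_tendsto htends (Eventually.of_forall fun k => hzr _ (hpos k))
    exact absurd this (not_le.2 hε)
  -- conclude the tendsto statement
  rw [ENNReal.tendsto_nhds_zero]
  intro ε hε
  obtain ⟨δ, hδ, hδε⟩ := key ε hε
  filter_upwards [Ioo_mem_nhdsGT_of_mem (by constructor <;> [rfl; exact hδ] : (0:ℝ) ∈ Ico 0 δ)]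
    with t ht
  apply iSup_le
  intro x
  rw [hball]
  exact le_trans (measure_mono (Metric.ball_subset_ball ht.2.le)) (hδε x)
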